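/- (Performance difference formula.) Let 𝕊 and 𝔸 be finite nonempty sets, P : 𝕊 × 𝔸 → (probability distributions on 𝕊) a transition kernel, c : 𝕊 × 𝔸 → ℝ a cost function, and π₁, π₂ : 𝕊 → 𝔸 two policies. Suppose d₁ is a probability distribution on 𝕊 that is stationary under π₁, i.e. Σ_{s} d₁(s)·P(z | s, π₁(s)) = d₁(z) for all z ∈ 𝕊; let J₁ := Σ_{s} d₁(s)·c(s, π₁(s)); and suppose J₂ ∈ ℝ and Q₂ : 𝕊 × 𝔸 → ℝ satisfy the Bellman equation for π₂: Q₂(s,a) = c(s,a) − J₂ + Σ_{s'} P(s' | s, a)·Q₂(s', π₂(s')) for all (s,a) ∈ 𝕊 × 𝔸. Then J₁ − J₂ = Σ_{s} d₁(s)·[Q₂(s, π₁(s)) − Q₂(s, π₂(s))]. -/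
import Mathlib


open Finset

/-- STATEMENT 13 (Performance difference formula) for a finite MDP. -/
theorem performance_difference
    {𝕊 𝔸 : Type*} [Fintype 𝕊] [Nonempty 𝕊] [Fintype 𝔸] [Nonempty 𝔸]
    (P : 𝕊 → 𝔸 → 𝕊 → ℝ)
    (hPnn : ∀ s a s', 0 ≤ P s a s')
    (hPsum : ∀ s a, ∑ s' : 𝕊, P s a s' = 1)
    (c : 𝕊 → 𝔸 → ℝ) (π₁ π₂ : 𝕊 → 𝔸)
    (d₁ : 𝕊 → ℝ)
    (hd₁nn : ∀ s, 0 ≤ d₁ s)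
    (hd₁sum : ∑ s : 𝕊, d₁ s = 1)
    (hstat : ∀ z : 𝕊, ∑ s : 𝕊, d₁ s * P s (π₁ s) z = d₁ z)
    (J₁ : ℝ) (hJ₁ : J₁ = ∑ s : 𝕊, d₁ s * c s (π₁ s))
    (J₂ : ℝ) (Q₂ : 𝕊 → 𝔸 → ℝ)
    (hBellman : ∀ s a, Q₂ s a = c s a - J₂ + ∑ s' : 𝕊, P s a s' * Q₂ s' (π₂ s')) :
    J₁ - J₂ = ∑ s : 𝕊, d₁ s * (Q₂ s (π₁ s) - Q₂ s (π₂ s)) := by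
  have key : ∑ s : 𝕊, d₁ s * Q₂ s (π₁ s)
      = J₁ - J₂ + ∑ s : 𝕊, d₁ s * Q₂ s (π₂ s) := by
    calc ∑ s : 𝕊, d₁ s * Q₂ s (π₁ s)
        = ∑ s : 𝕊, (d₁ s * c s (π₁ s) - d₁ s * J₂
            + ∑ s' : 𝕊, d₁ s * P s (π₁ s) s' * Q₂ s' (π₂ s')) := by
          refine Finset.sum_congr rfl fun s _ => ?_
          rw [hBellman s (π₁ s)]
          simp [mul_add, mul_sub, Finset.mul_sum, mul_assoc]
      _ = (∑ s : 𝕊, d₁ s * c s (π₁ s)) - (∑ s : 𝕊, d₁ s * J₂)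
            + ∑ s : 𝕊, ∑ s' : 𝕊, d₁ s * P s (π₁ s) s' * Q₂ s' (π₂ s') := by
          rw [Finset.sum_add_distrib, Finset.sum_sub_distrib]
      _ = J₁ - J₂ + ∑ s' : 𝕊, d₁ s' * Q₂ s' (π₂ s') := by
          rw [Finset.sum_comm]
          congr 1
          · rw [← hJ₁, ← Finset.sum_mul, hd₁sum, one_mul]
          · refine Finset.sum_congr rfl fun s' _ => ?_
            rw [← hstat s', Finset.sum_mul]
  have expand : ∑ s : 𝕊, d₁ s * (Q₂ s (π₁ s) - Q₂ s (π₂ s))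
      = (∑ s : 𝕊, d₁ s * Q₂ s (π₁ s)) - ∑ s : 𝕊, d₁ s * Q₂ s (π₂ s) := by
    rw [← Finset.sum_sub_distrib]
    exact Finset.sum_congr rfl fun s _ => by ring
  rw [expand, key]; ring
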